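/- For each pair of rows (2i−1, 2i) of a μ-UASM, at most one of the two rows can consist entirely of zeros, and if one row of the pair is entirely zero then the other row has all nonzero entries alternating starting and ending with 1. -/
import Mathlib


open scoped Classical

/-- A `μ`-alternating sign matrix with U-turn boundary (μ-UASM):
a `2n × m` matrix over `ℤ` satisfying (UA1)–(UA5). -/
def IsUASM (n m : ℕ) (μ : Fin n → ℕ) (A : Fin (2*n) → Fin m → ℤ) : Prop :=
  (∀ i q, A i q = -1 ∨ A i q = 0 ∨ A i q = 1) ∧
  (∀ (i : Fin (2*n)) (p : Fin m),
      (∑ q ∈ Finset.univ.filter (fun q => p ≤ q), A i q) = 0 ∨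
      (∑ q ∈ Finset.univ.filter (fun q => p ≤ q), A i q) = 1) ∧
  (∀ (j : Fin (2*n)) (q : Fin m),
      (∑ i ∈ Finset.univ.filter (fun i => j ≤ i), A i q) = 0 ∨
      (∑ i ∈ Finset.univ.filter (fun i => j ≤ i), A i q) = 1) ∧
  (∀ k : Fin n,
      (∑ q : Fin m, (A ⟨2*k.val, by have := k.isLt; omega⟩ q
           + A ⟨2*k.val+1, by have := k.isLt; omega⟩ q)) = 1) ∧
  (∀ q : Fin m, (∑ i, A i q) = if ∃ k, μ k = q.val+1 then 1 else 0)

/-- Row `r` of `A` has its nonzero entries alternating in sign,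
starting and ending with `1`. -/
def AltRowOne (n m : ℕ) (A : Fin (2*n) → Fin m → ℤ) (r : Fin (2*n)) : Prop :=
  (∀ q, A r q ≠ 0 → (∀ p, p < q → A r p = 0) → A r q = 1) ∧
  (∀ q, A r q ≠ 0 → (∀ p, q < p → A r p = 0) → A r q = 1) ∧
  (∀ q p, q < p → A r q ≠ 0 → A r p ≠ 0 →
      (∀ l, q < l → l < p → A r l = 0) → A r p = - A r q)

section Aux

variable {m : ℕ} (f : Fin m → ℤ)

private lemma uasm_sum_le_split (q : Fin m) :
    (∑ l ∈ Finset.univ.filter (fun l => q ≤ l), f l)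
      = f q + ∑ l ∈ Finset.univ.filter (fun l => q < l), f l := by
  have h : Finset.univ.filter (fun l => q ≤ l)
      = insert q (Finset.univ.filter (fun l : Fin m => q < l)) := by
    ext l
    simp only [Finset.mem_filter, Finset.mem_insert, Finset.mem_univ, true_and]
    constructor
    · intro h; rcases eq_or_lt_of_le h with h | h
      · exact Or.inl h.symm
      · exact Or.inr h
    · rintro (rfl | h)
      · exact le_refl _
      · exact le_of_lt h
  rw [h, Finset.sum_insert (by simp)]

private lemma uasm_T_mem
    (hS : ∀ p : Fin m, (∑ l ∈ Finset.univ.filter (fun l => p ≤ l), f l) = 0 ∨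
      (∑ l ∈ Finset.univ.filter (fun l => p ≤ l), f l) = 1) (q : Fin m) :
    (∑ l ∈ Finset.univ.filter (fun l => q < l), f l) = 0 ∨
      (∑ l ∈ Finset.univ.filter (fun l => q < l), f l) = 1 := by
  by_cases h : q.val + 1 < m
  · have he : Finset.univ.filter (fun l : Fin m => q < l)
        = Finset.univ.filter (fun l : Fin m => (⟨q.val+1, h⟩ : Fin m) ≤ l) := by
      ext l
      simp only [Finset.mem_filter, Finset.mem_univ, true_and, Fin.lt_def, Fin.le_def]
      omega
    rw [he]; exact hS _
  · left
    have he : Finset.univ.filter (fun l : Fin m => q < l) = ∅ := by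
      ext l
      simp only [Finset.mem_filter, Finset.mem_univ, true_and, Fin.lt_def,
        Finset.notMem_empty, iff_false]
      have := l.isLt; omega
    rw [he]; rfl

/-- The key combinatorial lemma for a single row. -/
private lemma uasm_alt_row (n : ℕ) (A : Fin (2*n) → Fin m → ℤ) (r : Fin (2*n))
    (hval : ∀ q, A r q = -1 ∨ A r q = 0 ∨ A r q = 1)
    (hS : ∀ p : Fin m, (∑ l ∈ Finset.univ.filter (fun l => p ≤ l), A r l) = 0 ∨
      (∑ l ∈ Finset.univ.filter (fun l => p ≤ l), A r l) = 1)
    (htot : (∑ q, A r q) = 1) :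
    AltRowOne n m A r := by
  refine ⟨?_, ?_, ?_⟩
  · -- leftmost nonzero is 1
    intro q hq hzero
    have hSq : (∑ l ∈ Finset.univ.filter (fun l => q ≤ l), A r l) = 1 := by
      rw [← htot]
      refine Finset.sum_subset (Finset.subset_univ _) ?_
      intro l _ hl
      simp only [Finset.mem_filter, Finset.mem_univ, true_and, not_le] at hl
      exact hzero l hl
    have hT := uasm_T_mem (A r) hS q
    have hsplit := uasm_sum_le_split (A r) q
    rcases hT with hT | hT <;> rcases hval q with h | h | h <;> omega
  · -- rightmost nonzero is 1
    intro q hq hzero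
    have hT : (∑ l ∈ Finset.univ.filter (fun l => q < l), A r l) = 0 := by
      apply Finset.sum_eq_zero
      intro l hl
      simp only [Finset.mem_filter, Finset.mem_univ, true_and] at hl
      exact hzero l hl
    have hsplit := uasm_sum_le_split (A r) q
    rcases hS q with h | h <;> rcases hval q with h' | h' | h' <;> omega
  · -- alternation
    intro q p hqp hq hp hzero
    have hTq : (∑ l ∈ Finset.univ.filter (fun l => q < l), A r l)
        = (∑ l ∈ Finset.univ.filter (fun l => p ≤ l), A r l) := by
      symm
      refine Finset.sum_subset ?_ ?_
      · intro l hl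
        simp only [Finset.mem_filter, Finset.mem_univ, true_and] at hl ⊢
        exact lt_of_lt_of_le hqp hl
      · intro l hl hnl
        simp only [Finset.mem_filter, Finset.mem_univ, true_and, not_le] at hl hnl
        exact hzero l hl hnl
    have hsq := uasm_sum_le_split (A r) q
    have hsp := uasm_sum_le_split (A r) p
    have hTp := uasm_T_mem (A r) hS p
    rcases hS q with h1 | h1 <;> rcases hS p with h2 | h2 <;>
      rcases hTp with h3 | h3 <;>
      rcases hval q with h4 | h4 | h4 <;> rcases hval p with h5 | h5 | h5 <;> omega

end Aux

/-- In each U-turn pair of rows of a `μ`-UASM at most one row is entirely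
zero, and if one row of the pair is zero then the other has all of its nonzero
entries alternating, starting and ending with `1`. -/
theorem uasm_uturn_pair (n m : ℕ) (μ : Fin n → ℕ)
    (hμ : StrictAnti μ) (hpos : ∀ i, 0 < μ i) (hμm : ∀ i, μ i ≤ m)
    (A : Fin (2*n) → Fin m → ℤ) (hA : IsUASM n m μ A) (k : Fin n) :
    (¬ ((∀ q, A ⟨2*k.val, by have := k.isLt; omega⟩ q = 0) ∧
        (∀ q, A ⟨2*k.val+1, by have := k.isLt; omega⟩ q = 0))) ∧
    ((∀ q, A ⟨2*k.val, by have := k.isLt; omega⟩ q = 0) →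
        AltRowOne n m A ⟨2*k.val+1, by have := k.isLt; omega⟩) ∧
    ((∀ q, A ⟨2*k.val+1, by have := k.isLt; omega⟩ q = 0) →
        AltRowOne n m A ⟨2*k.val, by have := k.isLt; omega⟩) := by
  obtain ⟨hval, hS, -, hpair, -⟩ := hA
  set r0 : Fin (2*n) := ⟨2*k.val, by have := k.isLt; omega⟩ with hr0
  set r1 : Fin (2*n) := ⟨2*k.val+1, by have := k.isLt; omega⟩ with hr1
  have hsum : (∑ q, A r0 q) + (∑ q, A r1 q) = 1 := by
    rw [← Finset.sum_add_distrib]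
    exact hpair k
  refine ⟨?_, ?_, ?_⟩
  · rintro ⟨h0, h1⟩
    have e0 : (∑ q, A r0 q) = 0 := Finset.sum_eq_zero fun q _ => h0 q
    have e1 : (∑ q, A r1 q) = 0 := Finset.sum_eq_zero fun q _ => h1 q
    omega
  · intro h0
    have e0 : (∑ q, A r0 q) = 0 := Finset.sum_eq_zero fun q _ => h0 q
    exact uasm_alt_row n A r1 (hval r1) (hS r1) (by omega)
  · intro h1
    have e1 : (∑ q, A r1 q) = 0 := Finset.sum_eq_zero fun q _ => h1 q
    exact uasm_alt_row n A r0 (hval r0) (hS r0) (by omega)
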